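/- Let A be an m×n real matrix and b ∈ ℝᵐ with X = {x ∈ ℝⁿ : A x ≤ b} nonempty, and let x⋆ be the unique least-norm point of X (the minimizer of ‖x‖ over X). Let Ā = [A | −b], K = { Āᵀ u : u ∈ ℝᵐ, u ≥ 0 } ⊆ ℝⁿ⁺¹, and ē = (0,…,0,1) ∈ ℝⁿ⁺¹. Then dist(ē, K)² = 1/(‖x⋆‖² + 1). -/

import Mathlib

open scoped RealInnerProductSpace

set_option maxHeartbeats 1000000 in
theorem cone_dist_sq_eq_inv_least_norm
    (m n : ℕ) (A : Matrix (Fin m) (Fin n) ℝ) (b : Fin m → ℝ)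
    (X : Set (EuclideanSpace ℝ (Fin n)))
    (hX : X = {x : EuclideanSpace ℝ (Fin n) | A.mulVec x ≤ b})
    (xstar : EuclideanSpace ℝ (Fin n))
    (hxstar : xstar ∈ X ∧ ∀ y ∈ X, ‖xstar‖ ≤ ‖y‖)
    (Abar : Matrix (Fin m) (Fin (n + 1)) ℝ)
    (hAbar : Abar = Matrix.of fun i => Fin.snoc (A i) (-(b i)))
    (K : Set (EuclideanSpace ℝ (Fin (n + 1))))
    (hK : K = {z : EuclideanSpace ℝ (Fin (n + 1)) | ∃ u : Fin m → ℝ, 0 ≤ u ∧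
        z = (WithLp.equiv 2 (Fin (n + 1) → ℝ)).symm (Abar.transpose.mulVec u)})
    (ebar : EuclideanSpace ℝ (Fin (n + 1)))
    (hebar : ebar = EuclideanSpace.single (Fin.last n) 1) :
    (Metric.infDist ebar K) ^ 2 = 1 / (‖xstar‖ ^ 2 + 1) := by
  obtain ⟨hxX, hxmin⟩ := hxstar
  have hAx : A.mulVec xstar ≤ b := by rwa [hX] at hxX
  set s : ℝ := ‖xstar‖ ^ 2 + 1 with hs_def
  have hs : 0 < s := by positivity
  -- the witness vector w = (x⋆, 1)
  set w : EuclideanSpace ℝ (Fin (n + 1)) :=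
    (WithLp.equiv 2 (Fin (n + 1) → ℝ)).symm (Fin.snoc (WithLp.equiv 2 (Fin n → ℝ) xstar) 1)
    with hw_def
  have hw_apply : ∀ j : Fin (n + 1), w j = Fin.snoc (α := fun _ => ℝ) (WithLp.equiv 2 (Fin n → ℝ) xstar) (1:ℝ) j :=
    fun j => by rw [hw_def, WithLp.equiv_symm_apply, PiLp.toLp_apply]
  have hnormsq : ∀ (N : ℕ) (x : EuclideanSpace ℝ (Fin N)), ‖x‖ ^ 2 = ∑ i, x i ^ 2 := by
    intro N x
    rw [← real_inner_self_eq_norm_sq]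
    simp only [PiLp.inner_apply, RCLike.inner_apply, conj_trivial, sq]
  have hww : ‖w‖ ^ 2 = s := by
    rw [hnormsq, Fin.sum_univ_castSucc]
    simp only [hw_apply, Fin.snoc_castSucc, Fin.snoc_last, WithLp.equiv_apply]
    rw [hs_def, hnormsq n xstar]
    norm_num
  have hwpos : 0 < ‖w‖ := by
    nlinarith [norm_nonneg w, hww, hs]
  -- inner product of a K-generator with w
  have hinner_w : ∀ u : Fin m → ℝ, 0 ≤ u →
      ⟪(WithLp.equiv 2 (Fin (n + 1) → ℝ)).symm (Abar.transpose.mulVec u), w⟫ ≤ 0 := by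
    intro u hu
    have : ⟪(WithLp.equiv 2 (Fin (n + 1) → ℝ)).symm (Abar.transpose.mulVec u), w⟫
        = ∑ i, u i * (A.mulVec xstar i - b i) := by
      simp only [PiLp.inner_apply, RCLike.inner_apply, conj_trivial]
      have : ∀ j, ((WithLp.equiv 2 (Fin (n + 1) → ℝ)).symm (Abar.transpose.mulVec u)) j
          = ∑ i, Abar i j * u i := by
        intro j; simp [Matrix.mulVec, dotProduct, Matrix.transpose_apply]
      simp only [this, mul_comm (w _), Finset.sum_mul]
      rw [Finset.sum_comm]
      apply Finset.sum_congr rfl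
      intro i _
      rw [Matrix.mulVec, dotProduct]
      rw [Fin.sum_univ_castSucc (f := fun j => Abar i j * u i * w j)]
      simp only [hAbar, Matrix.of_apply, hw_apply, Fin.snoc_castSucc, Fin.snoc_last,
        WithLp.equiv_apply]
      rw [mul_sub, Finset.mul_sum, sub_eq_add_neg]
      congr 1
      · exact Finset.sum_congr rfl fun j _ => by ring
      · ring
    rw [this]
    apply Finset.sum_nonpos
    intro i _
    exact mul_nonpos_of_nonneg_of_nonpos (hu i) (by linarith [hAx i])
  have hebar_w : ⟪ebar, w⟫ = 1 := by
    rw [hebar]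
    simp [EuclideanSpace.inner_single_left, hw_apply]
  -- K is nonempty
  have h0K : (0 : EuclideanSpace ℝ (Fin (n + 1))) ∈ K := by
    rw [hK]
    exact ⟨0, le_refl _, by simp⟩
  have hKne : K.Nonempty := ⟨0, h0K⟩
  -- lower bound: 1/‖w‖ ≤ infDist ebar K
  have hlow : 1 / ‖w‖ ≤ Metric.infDist ebar K := by
    haveI := hKne.to_subtype
    rw [Metric.infDist_eq_iInf]
    apply le_ciInf
    rintro ⟨z, hz⟩
    rw [hK] at hz
    obtain ⟨u, hu, rfl⟩ := hz
    have h1 : (1:ℝ) ≤ ⟪ebar - (WithLp.equiv 2 (Fin (n + 1) → ℝ)).symm (Abar.transpose.mulVec u), w⟫ := by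
      rw [inner_sub_left]
      have := hinner_w u hu
      linarith [hebar_w]
    have h2 := real_inner_le_norm (ebar - (WithLp.equiv 2 (Fin (n + 1) → ℝ)).symm (Abar.transpose.mulVec u)) w
    rw [dist_eq_norm]
    rw [div_le_iff₀ hwpos]
    linarith
  have hlowpos : 0 < Metric.infDist ebar K := lt_of_lt_of_le (div_pos one_pos hwpos) hlow
  have hlowsq : 1 / s ≤ (Metric.infDist ebar K) ^ 2 := by
    have := pow_le_pow_left₀ (le_of_lt (div_pos one_pos hwpos)) hlow 2
    calc 1 / s = (1 / ‖w‖) ^ 2 := by rw [div_pow, one_pow, hww]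
      _ ≤ _ := this
  -- upper bound via projection onto closure K
  have hKconv : Convex ℝ K := by
    rw [hK]
    rintro z ⟨u, hu, rfl⟩ z' ⟨u', hu', rfl⟩ a c ha hc hac
    refine ⟨a • u + c • u', ?_, ?_⟩
    · intro i
      simp only [Pi.add_apply, Pi.smul_apply, Pi.zero_apply, smul_eq_mul]
      have h1 : (0:ℝ) ≤ u i := hu i
      have h2 : (0:ℝ) ≤ u' i := hu' i
      positivity
    · ext j
      simp only [PiLp.add_apply, PiLp.smul_apply, WithLp.equiv_symm_apply, PiLp.toLp_apply,
        Matrix.mulVec_add, Matrix.mulVec_smul, Pi.add_apply, Pi.smul_apply, smul_eq_mul]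
  have hKsmul : ∀ (c : ℝ), 0 ≤ c → ∀ z ∈ K, c • z ∈ K := by
    intro c hc z hz
    rw [hK] at hz ⊢
    obtain ⟨u, hu, rfl⟩ := hz
    refine ⟨c • u, fun i => mul_nonneg hc (hu i), ?_⟩
    ext j
    simp [Matrix.mulVec_smul]
  obtain ⟨p, hpC, hp⟩ := isClosed_closure.exists_infDist_eq_dist hKne.closure ebar
  have hinf_eq : Metric.infDist ebar K = ‖ebar - p‖ := by
    rw [← Metric.infDist_closure, hp, dist_eq_norm]
  have hproj : ∀ z ∈ closure K, ⟪ebar - p, z - p⟫ ≤ 0 := by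
    rw [← norm_eq_iInf_iff_real_inner_le_zero hKconv.closure hpC]
    rw [← dist_eq_norm, ← hp, Metric.infDist_eq_iInf]
    simp_rw [dist_eq_norm]
  set v : EuclideanSpace ℝ (Fin (n + 1)) := ebar - p with hv_def
  have h2pC : (2:ℝ) • p ∈ closure K := by
    have hmap : Continuous fun z : EuclideanSpace ℝ (Fin (n + 1)) => (2:ℝ) • z :=
      continuous_const_smul _
    have : ((2:ℝ) • ·) p ∈ closure K :=
      map_mem_closure hmap hpC (fun z hz => hKsmul 2 (by norm_num) z hz)
    simpa using this
  have hvp0 : ⟪v, p⟫ = 0 := by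
    have h1 := hproj 0 (subset_closure h0K)
    have h2 := hproj ((2:ℝ) • p) h2pC
    rw [zero_sub, inner_neg_right] at h1
    have : (2:ℝ) • p - p = p := by module
    rw [this] at h2
    linarith
  have hvK : ∀ z ∈ K, ⟪v, z⟫ ≤ 0 := by
    intro z hz
    have := hproj z (subset_closure hz)
    rw [inner_sub_right, hvp0] at this
    linarith
  have hpv : p + v = ebar := by rw [hv_def]; abel
  set t : ℝ := v (Fin.last n) with ht_def
  have hvt : t = ‖v‖ ^ 2 := by
    have h1 : ⟪v, ebar⟫ = t := by
      rw [hebar]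
      simp [EuclideanSpace.inner_single_right, ht_def]
    have h2 : ⟪v, ebar⟫ = ‖v‖ ^ 2 := by
      rw [← hpv, inner_add_right, hvp0, real_inner_self_eq_norm_sq, zero_add]
    linarith
  -- coordinates split of v
  set y : EuclideanSpace ℝ (Fin n) :=
    (WithLp.equiv 2 (Fin n → ℝ)).symm (fun j => v (Fin.castSucc j)) with hy_def
  have hy_apply : ∀ j : Fin n, y j = v (Fin.castSucc j) :=
    fun j => by rw [hy_def, WithLp.equiv_symm_apply, PiLp.toLp_apply]
  have hgen : ∀ i, A.mulVec y i ≤ t * b i := by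
    intro i
    have hzK : (WithLp.equiv 2 (Fin (n + 1) → ℝ)).symm
        (Abar.transpose.mulVec (Pi.single i 1)) ∈ K := by
      rw [hK]
      refine ⟨Pi.single i 1, ?_, rfl⟩
      intro j
      classical
      by_cases h : j = i <;> simp [Pi.single_apply, h]
    have h1 := hvK _ hzK
    have h2 : ⟪v, (WithLp.equiv 2 (Fin (n + 1) → ℝ)).symm
        (Abar.transpose.mulVec (Pi.single i 1))⟫ = A.mulVec y i - t * b i := by
      simp only [PiLp.inner_apply, RCLike.inner_apply, conj_trivial,
        WithLp.equiv_symm_apply, PiLp.toLp_apply]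
      have hsingle : ∀ j, Abar.transpose.mulVec (Pi.single i 1) j = Abar i j := by
        intro j; simp [Matrix.mulVec_single]
      simp only [hsingle]
      rw [Fin.sum_univ_castSucc (f := fun j => Abar i j * v j)]
      simp only [hAbar, Matrix.of_apply, Fin.snoc_castSucc, Fin.snoc_last]
      rw [Matrix.mulVec, dotProduct]
      simp only [hy_apply]
      rw [sub_eq_add_neg]
      congr 1
      · rw [← ht_def]; ring
    linarith [h2 ▸ h1]
  have hvsplit : ‖v‖ ^ 2 = ‖y‖ ^ 2 + t ^ 2 := by
    rw [hnormsq _ v, hnormsq _ y, Fin.sum_univ_castSucc (f := fun j => v j ^ 2)]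
    simp only [hy_apply, ht_def]
  have hvpos : 0 < ‖v‖ := by rw [← hinf_eq]; exact hlowpos
  have ht_pos : 0 < t := by rw [hvt]; positivity
  have hxmem : (t⁻¹ • y) ∈ X := by
    rw [hX]
    intro i
    have hdef : A.mulVec (t⁻¹ • y) i = t⁻¹ * A.mulVec y i := by
      simp only [Matrix.mulVec, dotProduct, PiLp.smul_apply, Pi.smul_apply, smul_eq_mul,
        Finset.mul_sum]
      exact Finset.sum_congr rfl fun j _ => by ring
    rw [WithLp.ofLp_smul, hdef]
    calc t⁻¹ * A.mulVec y i ≤ t⁻¹ * (t * b i) :=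
          mul_le_mul_of_nonneg_left (hgen i) (by positivity)
      _ = b i := by field_simp
  have hnx : ‖xstar‖ ≤ t⁻¹ * ‖y‖ := by
    have := hxmin _ hxmem
    rwa [norm_smul, Real.norm_eq_abs, abs_of_pos (by positivity)] at this
  have hyn : t * ‖xstar‖ ≤ ‖y‖ := by
    calc t * ‖xstar‖ ≤ t * (t⁻¹ * ‖y‖) := mul_le_mul_of_nonneg_left hnx ht_pos.le
      _ = ‖y‖ := by field_simp
  have hsq : t ^ 2 * ‖xstar‖ ^ 2 ≤ ‖y‖ ^ 2 := by
    have := pow_le_pow_left₀ (by positivity) hyn 2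
    calc t ^ 2 * ‖xstar‖ ^ 2 = (t * ‖xstar‖) ^ 2 := by ring
      _ ≤ ‖y‖ ^ 2 := this
  have h1 : t = ‖y‖ ^ 2 + t ^ 2 := by linarith [hvsplit, hvt]
  have hfinal : t * s ≤ 1 := by nlinarith [hsq, h1, ht_pos, hs_def]
  have hkey : Metric.infDist ebar K ^ 2 = t := by rw [hinf_eq, ← hvt]
  rw [hkey] at hlowsq ⊢
  have hup : t ≤ 1 / s := by
    rw [le_div_iff₀ hs]
    exact hfinal
  linarith
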